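/- Let d ≥ 2 and n_1,...,n_d ≥ 2 be integers. A subgraph H of Grid(n_1,...,n_d) is isomorphic to Q_d if and only if there exists (x_1,...,x_d) ∈ [n_1-1]×⋯×[n_d-1] such that the vertex set of H is {(x_1+ε_1,...,x_d+ε_d) : (ε_1,...,ε_d) ∈ {0,1}^d} and H contains all edges of Grid(n_1,...,n_d) between these vertices. -/

import Mathlib

/-- The grid graph `Grid(n 0, …, n (d-1))`: vertices are tuples whose `i`-th coordinate
ranges over a set of size `n i` (we use `Fin (n i) = {0, …, n i - 1}`, corresponding to the
coordinate `[n i] = {1, …, n i}` via `v ↦ v + 1`); two vertices are adjacent iff they differ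
by exactly one in one coordinate and agree in all others. -/
def gridGraph {d : ℕ} (n : Fin d → ℕ) : SimpleGraph (∀ i, Fin (n i)) where
  Adj x y := ∃ i, ((x i : ℕ) + 1 = (y i : ℕ) ∨ (y i : ℕ) + 1 = (x i : ℕ)) ∧
    ∀ j, j ≠ i → x j = y j
  symm := by
    constructor
    rintro x y ⟨i, h, hj⟩
    exact ⟨i, h.symm, fun j hji => (hj j hji).symm⟩
  loopless := by
    constructor
    rintro x ⟨i, h, -⟩
    rcases h with h | h <;> omega

/-- `f` is an `H`-magic vertex labeling of `G` with `H`-magic sum `c`: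
a bijection from the vertices of `G` onto `{1, …, |V|}` such that the vertex labels of every
subgraph of `G` isomorphic to `H` sum to `c`. -/
def IsMagicVertexLabeling {V : Type*} [Fintype V] {W : Type*}
    (G : SimpleGraph V) (H : SimpleGraph W) (f : V → ℤ) (c : ℤ) : Prop :=
  Set.BijOn f Set.univ (Set.Icc 1 (Fintype.card V : ℤ)) ∧
  ∀ G' : G.Subgraph, Nonempty (G'.coe ≃g H) → ∑ᶠ v ∈ G'.verts, f v = c

/-- `g` is an `H`-magic edge labeling of `G` with `H`-magic sum `c`:
a bijection from the edges of `G` onto `{1, …, |E|}` such that the edge labels of every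
subgraph of `G` isomorphic to `H` sum to `c`. -/
def IsMagicEdgeLabeling {V : Type*} [Fintype V] {W : Type*}
    (G : SimpleGraph V) (H : SimpleGraph W) (g : Sym2 V → ℤ) (c : ℤ) : Prop :=
  Set.BijOn g G.edgeSet (Set.Icc 1 (G.edgeSet.ncard : ℤ)) ∧
  ∀ G' : G.Subgraph, Nonempty (G'.coe ≃g H) → ∑ᶠ e ∈ G'.edgeSet, g e = c

/-- `G` admits an `H`-covering: every edge of `G` belongs to at least one subgraph of `G`
isomorphic to `H`. -/
def AdmitsCovering {V W : Type*} (G : SimpleGraph V) (H : SimpleGraph W) : Prop :=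
  ∀ e ∈ G.edgeSet, ∃ G' : G.Subgraph, e ∈ G'.edgeSet ∧ Nonempty (G'.coe ≃g H)

/-- `(Fv, Fe)` is an `H`-supermagic labeling of `G` with `H`-supermagic sum `c`:
the vertex part is a bijection onto `{1, …, |V|}`, the edge part is a bijection from the
edges onto `{|V|+1, …, |V|+|E|}` (together a bijection `V ∪ E → {1, …, |V|+|E|}` mapping `V`
onto `{1, …, |V|}`), and the labels of every subgraph isomorphic to `H` sum to `c`. -/
def IsSupermagicLabeling {V : Type*} [Fintype V] {W : Type*}
    (G : SimpleGraph V) (H : SimpleGraph W) (Fv : V → ℤ) (Fe : Sym2 V → ℤ) (c : ℤ) : Prop :=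
  Set.BijOn Fv Set.univ (Set.Icc 1 (Fintype.card V : ℤ)) ∧
  Set.BijOn Fe G.edgeSet
    (Set.Icc ((Fintype.card V : ℤ) + 1) ((Fintype.card V : ℤ) + (G.edgeSet.ncard : ℤ))) ∧
  ∀ G' : G.Subgraph, Nonempty (G'.coe ≃g H) →
    (∑ᶠ v ∈ G'.verts, Fv v) + (∑ᶠ e ∈ G'.edgeSet, Fe e) = c

/-- `G` is `H`-supermagic with `H`-supermagic sum `c`. -/
def IsSupermagic {V : Type*} [Fintype V] {W : Type*}
    (G : SimpleGraph V) (H : SimpleGraph W) (c : ℤ) : Prop :=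
  AdmitsCovering G H ∧ ∃ Fv Fe, IsSupermagicLabeling G H Fv Fe c


def IsStep {d : ℕ} (w : Fin d → ℤ) : Prop :=
  ∃ i, (w i = 1 ∨ w i = -1) ∧ ∀ j, j ≠ i → w j = 0

lemma isStep_neg {d : ℕ} {w : Fin d → ℤ} (h : IsStep w) : IsStep (-w) := by
  obtain ⟨i, h1, h2⟩ := h
  refine ⟨i, ?_, fun j hj => by simp [h2 j hj]⟩
  rcases h1 with h1 | h1 <;> simp [h1]

lemma fourCycle {d : ℕ} {a b c e : Fin d → ℤ}
    (ha : IsStep a) (hb : IsStep b) (hc : IsStep c) (he : IsStep e)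
    (hsum : ∀ m, a m + b m + c m + e m = 0)
    (hab : a + b ≠ 0) (hbc : b + c ≠ 0) : c = -a := by
  obtain ⟨ia, sa, za⟩ := ha
  obtain ⟨ib, sb, zb⟩ := hb
  obtain ⟨ic, sc, zc⟩ := hc
  obtain ⟨ie, se, ze⟩ := he
  by_cases h1 : ib = ia
  · subst h1
    -- a ib = b ib (same sign)
    have hsab : a ib = b ib := by
      by_contra hne
      apply hab
      funext m
      by_cases hm : m = ib
      · subst hm; simp only [Pi.add_apply, Pi.zero_apply]; omega
      · simp [Pi.add_apply, za m hm, zb m hm]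
    have h3 := hsum ib
    have hcle : c ib = 1 ∨ c ib = -1 ∨ c ib = 0 := by
      by_cases hcc : ib = ic
      · subst hcc; omega
      · exact Or.inr (Or.inr (zc ib hcc))
    have hele : e ib = 1 ∨ e ib = -1 ∨ e ib = 0 := by
      by_cases hee : ib = ie
      · subst hee; omega
      · exact Or.inr (Or.inr (ze ib hee))
    have hcb : c ib = - a ib := by omega
    have hic : ic = ib := by
      by_contra hne
      have := zc ib (fun h => hne h.symm)
      omega
    exfalso
    apply hbc
    funext m
    by_cases hm : m = ib
    · subst hm; simp only [Pi.add_apply, Pi.zero_apply]; omega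
    · simp [Pi.add_apply, zb m hm, zc m (by rw [hic]; exact hm)]
  · -- ib ≠ ia
    by_cases h2 : ic = ia
    · -- conclusion case
      -- first, e ib = -b ib hence ie = ib hence e ia = 0
      have hba : b ia = 0 := zb ia (fun h => h1 h.symm)
      have hcbz : c ib = 0 := zc ib (by rw [h2]; exact fun h => h1 h)
      have hab' : a ib = 0 := za ib (fun h => h1 h)
      have h3 := hsum ib
      have heb : e ib = - b ib := by omega
      have hie : ie = ib := by
        by_contra hne
        have := ze ib (fun h => hne h.symm)
        omega
      have hea : e ia = 0 := by
        subst hie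
        exact ze ia (fun h => h1 h.symm)
      have h4 := hsum ia
      funext m
      by_cases hm : m = ia
      · subst hm; simp only [Pi.neg_apply]; omega
      · simp [zc m (by rw [h2]; exact hm), za m hm]
    · -- contradiction case
      exfalso
      have hba : b ia = 0 := zb ia (fun h => h1 h.symm)
      have hca : c ia = 0 := zc ia (fun h => h2 h.symm)
      have h3 := hsum ia
      have hea : e ia = - a ia := by omega
      have hie : ie = ia := by
        by_contra hne
        have := ze ia (fun h => hne h.symm)
        omega
      have heb : e ib = 0 := by
        subst hie; exact ze ib (fun h => h1 h)
      have hab' : a ib = 0 := za ib (fun h => h1 h)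
      have h4 := hsum ib
      have hcb : c ib = - b ib := by omega
      have hic : ic = ib := by
        by_contra hne
        have := zc ib (fun h => hne h.symm)
        omega
      apply hbc
      funext m
      by_cases hm : m = ib
      · subst hm; simp only [Pi.add_apply, Pi.zero_apply]; omega
      · simp [Pi.add_apply, zb m hm, zc m (by rw [hic]; exact hm)]

section Core
variable {d : ℕ}

def flip2 (j : Fin d) (ε : Fin d → Fin 2) : Fin d → Fin 2 :=
  fun k => if k = j then ε j + 1 else ε k

lemma flip2_self (j : Fin d) (ε : Fin d → Fin 2) : flip2 j ε j = ε j + 1 := by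
  simp [flip2]

lemma flip2_ne' {k j : Fin d} (h : k ≠ j) (ε : Fin d → Fin 2) : flip2 j ε k = ε k := by
  simp [flip2, h]

lemma fin2_add_one_ne (a : Fin 2) : a + 1 ≠ a := by revert a; decide

lemma fin2_add_one_add_one (a : Fin 2) : a + 1 + 1 = a := by revert a; decide

lemma flip2_flip2 (j : Fin d) (ε : Fin d → Fin 2) : flip2 j (flip2 j ε) = ε := by
  funext k
  by_cases h : k = j
  · subst h; rw [flip2_self, flip2_self, fin2_add_one_add_one]
  · rw [flip2_ne' h, flip2_ne' h]

lemma flip2_comm {j k : Fin d} (h : j ≠ k) (ε : Fin d → Fin 2) :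
    flip2 j (flip2 k ε) = flip2 k (flip2 j ε) := by
  funext m
  by_cases hm : m = j
  · subst hm
    rw [flip2_self, flip2_ne' h, flip2_ne' h, flip2_self]
  · rw [flip2_ne' hm]
    by_cases hm' : m = k
    · subst hm'
      rw [flip2_self, flip2_self, flip2_ne' (Ne.symm h)]
    · rw [flip2_ne' hm', flip2_ne' hm', flip2_ne' hm]

lemma flip2_ne (j : Fin d) (ε : Fin d → Fin 2) : flip2 j ε ≠ ε := by
  intro h
  have := congrFun h j
  rw [flip2_self] at this
  exact fin2_add_one_ne _ this

variable (F : (Fin d → Fin 2) → (Fin d → ℤ))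
  (hinj : Function.Injective F)
  (hstep : ∀ ε j, IsStep (F (flip2 j ε) - F ε))

include hinj hstep in
lemma key_inv {j k : Fin d} (h : j ≠ k) (ε : Fin d → Fin 2) :
    F (flip2 j (flip2 k ε)) - F (flip2 k ε) = F (flip2 j ε) - F ε := by
  have hFne : ∀ x y : Fin d → Fin 2, x ≠ y → F x - F y ≠ 0 := by
    intro x y hxy h0
    exact hxy (hinj (by rwa [sub_eq_zero] at h0))
  have hcomm : flip2 k (flip2 j ε) = flip2 j (flip2 k ε) := flip2_comm (Ne.symm h) ε
  have hc : IsStep (F (flip2 k ε) - F (flip2 k (flip2 j ε))) := by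
    rw [hcomm]
    have := isStep_neg (hstep (flip2 k ε) j)
    simpa [neg_sub] using this
  have he : IsStep (F ε - F (flip2 k ε)) := by
    have := isStep_neg (hstep ε k)
    simpa [neg_sub] using this
  have hres := fourCycle (hstep ε j) (hstep (flip2 j ε) k) hc he
    (by intro m; simp only [Pi.sub_apply]; ring)
    (by
      have : (F (flip2 j ε) - F ε) + (F (flip2 k (flip2 j ε)) - F (flip2 j ε))
          = F (flip2 k (flip2 j ε)) - F ε := by ring
      rw [this]
      apply hFne
      intro hcon
      have := congrFun hcon k
      rw [flip2_self, flip2_ne' (Ne.symm h)] at this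
      exact fin2_add_one_ne _ this)
    (by
      have : (F (flip2 k (flip2 j ε)) - F (flip2 j ε)) + (F (flip2 k ε) - F (flip2 k (flip2 j ε)))
          = F (flip2 k ε) - F (flip2 j ε) := by ring
      rw [this]
      apply hFne
      intro hcon
      have := congrFun hcon j
      rw [flip2_ne' h, flip2_self] at this
      exact fin2_add_one_ne _ this.symm)
  have : F (flip2 k ε) - F (flip2 k (flip2 j ε)) = -(F (flip2 j ε) - F ε) := hres
  rw [hcomm] at this
  funext m
  have := congrFun this m
  simp only [Pi.sub_apply, Pi.neg_apply] at this ⊢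
  omega

end Core

section Core2
variable {d : ℕ}

lemma fin2_cases (a : Fin 2) : a = 0 ∨ a = 1 := by revert a; decide

def wt (ε : Fin d → Fin 2) : ℕ := (Finset.univ.filter fun k => ε k = 1).card

def e0 : Fin d → Fin 2 := fun _ => 0

lemma wt_eq_zero {ε : Fin d → Fin 2} (h : wt ε = 0) : ε = e0 := by
  funext k
  rcases fin2_cases (ε k) with h' | h'
  · exact h'
  · exfalso
    have : k ∈ Finset.univ.filter fun k => ε k = 1 := by simp [h']
    rw [Finset.card_eq_zero.mp h] at this
    exact absurd this (Finset.notMem_empty k)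

lemma filter_flip2 {ε : Fin d → Fin 2} {k : Fin d} (hk : ε k = 1) :
    (Finset.univ.filter fun m => flip2 k ε m = 1)
      = (Finset.univ.filter fun m => ε m = 1).erase k := by
  ext m
  simp only [Finset.mem_filter, Finset.mem_univ, true_and, Finset.mem_erase]
  by_cases hm : m = k
  · subst hm
    rw [flip2_self, hk]
    simp
  · rw [flip2_ne' hm]
    simp [hm]

lemma exists_one_of_wt_ne {ε : Fin d → Fin 2} (h : wt ε ≠ 0) : ∃ k, ε k = 1 := by
  obtain ⟨k, hk⟩ := Finset.card_ne_zero.mp h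
  exact ⟨k, (Finset.mem_filter.mp hk).2⟩

variable (F : (Fin d → Fin 2) → (Fin d → ℤ))
  (hinj : Function.Injective F)
  (hstep : ∀ ε j, IsStep (F (flip2 j ε) - F ε))

include hinj hstep in
lemma shiftAux : ∀ N (ε : Fin d → Fin 2) (j : Fin d), wt ε ≤ N → ε j = 0 →
    F (flip2 j ε) - F ε = F (flip2 j e0) - F e0 := by
  intro N
  induction N with
  | zero =>
    intro ε j hw hj
    rw [wt_eq_zero (Nat.le_zero.mp hw)]
  | succ N ih =>
    intro ε j hw hj
    by_cases h0 : wt ε = 0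
    · rw [wt_eq_zero h0]
    · obtain ⟨k, hk⟩ := exists_one_of_wt_ne h0
      have hjk : j ≠ k := by
        intro h; rw [h, hk] at hj; exact absurd hj (by decide)
      have h1 : F (flip2 j ε) - F ε = F (flip2 j (flip2 k ε)) - F (flip2 k ε) := by
        conv_lhs => rw [← flip2_flip2 k ε]
        exact key_inv F hinj hstep hjk (flip2 k ε)
      rw [h1]
      apply ih
      · have hcard : wt (flip2 k ε) = wt ε - 1 := by
          unfold wt
          rw [filter_flip2 hk]
          rw [Finset.card_erase_of_mem (by simp [hk])]
        omega
      · rw [flip2_ne' hjk]; exact hj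

include hinj hstep in
lemma reprAux : ∀ N (ε : Fin d → Fin 2), wt ε ≤ N →
    F ε = F e0 + ∑ j ∈ Finset.univ.filter (fun k => ε k = 1), (F (flip2 j e0) - F e0) := by
  intro N
  induction N with
  | zero =>
    intro ε hw
    rw [wt_eq_zero (Nat.le_zero.mp hw)]
    have : (Finset.univ.filter fun k => e0 k = 1) = (∅ : Finset (Fin d)) := by
      ext m; simp [e0]
    rw [this]
    simp
  | succ N ih =>
    intro ε hw
    by_cases h0 : wt ε = 0
    · rw [wt_eq_zero h0]
      have : (Finset.univ.filter fun k => e0 k = 1) = (∅ : Finset (Fin d)) := by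
        ext m; simp [e0]
      rw [this]
      simp
    · obtain ⟨k, hk⟩ := exists_one_of_wt_ne h0
      set ε' := flip2 k ε with hε'
      have hek : ε = flip2 k ε' := (flip2_flip2 k ε).symm
      have hε'k : ε' k = 0 := by
        rw [hε', flip2_self, hk]
        decide
      have hwt' : wt ε' = wt ε - 1 := by
        unfold wt
        rw [hε', filter_flip2 hk, Finset.card_erase_of_mem (by simp [hk])]
      have hstep1 : F ε - F ε' = F (flip2 k e0) - F e0 := by
        rw [hek]
        exact shiftAux F hinj hstep (wt ε') ε' k le_rfl hε'k
      have hrepr' := ih ε' (by omega)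
      have hfilt : (Finset.univ.filter fun m => ε m = 1)
          = insert k (Finset.univ.filter fun m => ε' m = 1) := by
        rw [hε', filter_flip2 hk, Finset.insert_erase (by simp [hk])]
      rw [hfilt, Finset.sum_insert (by rw [hε', filter_flip2 hk]; exact Finset.notMem_erase _ _)]
      have : F ε = (F ε - F ε') + F ε' := by ring
      rw [this, hstep1, hrepr']
      ring

end Core2


lemma grid2_adj_iff {d : ℕ} {x y : Fin d → Fin 2} :
    (gridGraph (fun _ : Fin d => 2)).Adj x y ↔ ∃ i, x i ≠ y i ∧ ∀ j, j ≠ i → x j = y j := by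
  constructor
  · rintro ⟨i, hi, hj⟩
    refine ⟨i, fun h => ?_, hj⟩
    rw [h] at hi
    omega
  · rintro ⟨i, hi, hj⟩
    refine ⟨i, ?_, hj⟩
    have h1 : (x i : ℕ) < 2 := (x i).isLt
    have h2 : (y i : ℕ) < 2 := (y i).isLt
    have h3 : (x i : ℕ) ≠ (y i : ℕ) := fun h => hi (Fin.ext h)
    omega

lemma adjQ {d : ℕ} (ε : Fin d → Fin 2) (j : Fin d) :
    (gridGraph (fun _ : Fin d => 2)).Adj ε (flip2 j ε) := by
  rw [grid2_adj_iff]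
  refine ⟨j, fun h => ?_, fun k hk => (flip2_ne' hk ε).symm⟩
  rw [flip2_self] at h
  exact fin2_add_one_ne _ h.symm

lemma fin2_ne_imp (a b : Fin 2) (h : a ≠ b) : ((a:ℕ)+1 = (b:ℕ) ∨ (b:ℕ)+1 = (a:ℕ)) := by
  revert a b; decide

lemma isStep_of_grid_adj {d : ℕ} {n : Fin d → ℕ} {u v : ∀ i, Fin (n i)}
    (h : (gridGraph n).Adj u v) : IsStep (fun m => ((v m : ℕ) : ℤ) - ((u m : ℕ) : ℤ)) := by
  obtain ⟨i, hi, hj⟩ := h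
  refine ⟨i, ?_, fun j hji => ?_⟩
  · show ((v i : ℕ) : ℤ) - ((u i : ℕ) : ℤ) = 1 ∨ ((v i : ℕ) : ℤ) - ((u i : ℕ) : ℤ) = -1
    omega
  · show ((v j : ℕ) : ℤ) - ((u j : ℕ) : ℤ) = 0
    rw [hj j hji]; ring

lemma forward_dir (d : ℕ) (n : Fin d → ℕ) (hn : ∀ i, 2 ≤ n i)
    (H : (gridGraph n).Subgraph)
    (iso : H.coe ≃g gridGraph (fun _ : Fin d => (2 : ℕ))) :
    ∃ x : Fin d → ℕ, (∀ i, 1 ≤ x i ∧ x i ≤ n i - 1) ∧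
      H.verts = {v | ∀ i, (v i : ℕ) + 1 = x i ∨ (v i : ℕ) + 1 = x i + 1} ∧
      (∀ u v, u ∈ H.verts → v ∈ H.verts → (gridGraph n).Adj u v → H.Adj u v) := by
  classical
  set ψ : (Fin d → Fin 2) → H.verts := fun ε => iso.symm ε with hψdef
  set F : (Fin d → Fin 2) → (Fin d → ℤ) :=
    fun ε => fun m => (((ψ ε : ∀ i, Fin (n i)) m : ℕ) : ℤ) with hFdef
  have hinj : Function.Injective F := by
    intro a b hab
    have h1 : (ψ a : ∀ i, Fin (n i)) = (ψ b : ∀ i, Fin (n i)) := by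
      funext m
      have := congrFun hab m
      simp only [hFdef] at this
      exact Fin.ext (by exact_mod_cast this)
    have h2 : ψ a = ψ b := Subtype.coe_injective h1
    exact (RelIso.injective iso.symm) h2
  have hstep : ∀ ε j, IsStep (F (flip2 j ε) - F ε) := by
    intro ε j
    have h2 : H.coe.Adj (ψ ε) (ψ (flip2 j ε)) := iso.symm.map_rel_iff.mpr (adjQ ε j)
    have h3 : H.Adj ↑(ψ ε) ↑(ψ (flip2 j ε)) := h2
    have h4 := H.adj_sub h3
    have h5 := isStep_of_grid_adj h4
    have heq : F (flip2 j ε) - F ε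
        = fun m => (((ψ (flip2 j ε) : ∀ i, Fin (n i)) m : ℕ) : ℤ)
          - (((ψ ε : ∀ i, Fin (n i)) m : ℕ) : ℤ) := by
      funext m; simp [hFdef]
    rw [heq]
    exact h5
  -- direction vectors
  have hv : ∀ j, IsStep (F (flip2 j e0) - F e0) := fun j => hstep e0 j
  choose idx hs hz using hv
  have repr' : ∀ ε, F ε = F e0
      + ∑ j ∈ Finset.univ.filter (fun k => ε k = 1), (F (flip2 j e0) - F e0) :=
    fun ε => reprAux F hinj hstep (wt ε) ε le_rfl
  -- idx is injective
  have hidxinj : Function.Injective idx := by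
    intro j j' hjj
    by_contra hne
    have hne' : j' ≠ j := fun h => hne h.symm
    have hvcases : (F (flip2 j' e0) - F e0) = (F (flip2 j e0) - F e0)
        ∨ (F (flip2 j' e0) - F e0) = -(F (flip2 j e0) - F e0) := by
      have hq : (F (flip2 j' e0) - F e0) (idx j) = 1 ∨ (F (flip2 j' e0) - F e0) (idx j) = -1 := by
        rw [hjj]; exact hs j'
      have hz' : ∀ m, m ≠ idx j → (F (flip2 j' e0) - F e0) m = 0 := by
        intro m hm
        exact hz j' m (by rw [← hjj]; exact hm)
      rcases hs j with h1 | h1 <;> rcases hq with h2 | h2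
      · left; funext m
        by_cases hm : m = idx j
        · subst hm; omega
        · have e1 := hz' m hm; have e2 := hz j m hm; omega
      · right; funext m
        by_cases hm : m = idx j
        · subst hm; simp only [Pi.neg_apply]; omega
        · have e1 := hz' m hm; have e2 := hz j m hm; simp only [Pi.neg_apply]; omega
      · right; funext m
        by_cases hm : m = idx j
        · subst hm; simp only [Pi.neg_apply]; omega
        · have e1 := hz' m hm; have e2 := hz j m hm; simp only [Pi.neg_apply]; omega
      · left; funext m
        by_cases hm : m = idx j
        · subst hm; omega
        · have e1 := hz' m hm; have e2 := hz j m hm; omega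
    rcases hvcases with hc | hc
    · have hFeq : F (flip2 j' e0) = F (flip2 j e0) := by
        funext m
        have := congrFun hc m
        simp only [Pi.sub_apply] at this
        omega
      have h2 := hinj hFeq
      have h3 := congrFun h2 j
      rw [flip2_ne' hne, flip2_self] at h3
      simp only [e0] at h3
      exact absurd h3 (by decide)
    · -- F (flip2 j (flip2 j' e0)) = F e0
      have hfilt : (Finset.univ.filter fun k => flip2 j (flip2 j' e0) k = 1)
          = {j, j'} := by
        ext m
        simp only [Finset.mem_filter, Finset.mem_univ, true_and, Finset.mem_insert,
          Finset.mem_singleton]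
        by_cases hm : m = j
        · subst hm
          rw [flip2_self, flip2_ne' hne]
          simp [e0]
        · rw [flip2_ne' hm]
          by_cases hm' : m = j'
          · subst hm'
            rw [flip2_self]
            simp [e0, hm]
          · rw [flip2_ne' hm']
            simp [e0, hm, hm']
      have h4 := repr' (flip2 j (flip2 j' e0))
      rw [hfilt, Finset.sum_pair hne, hc] at h4
      simp only [add_neg_cancel, add_zero] at h4
      have h5 := hinj h4
      have h6 := congrFun h5 j
      rw [flip2_self, flip2_ne' hne] at h6
      simp only [e0] at h6
      exact absurd h6 (by decide)
  have hidxbij : Function.Bijective idx := (Finite.injective_iff_bijective).mp hidxinj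
  set σ : Fin d ≃ Fin d := Equiv.ofBijective idx hidxbij with hσdef
  have hσ : ∀ m, idx (σ.symm m) = m := fun m => σ.apply_symm_apply m
  set sval : Fin d → ℤ := fun j => (F (flip2 j e0) - F e0) (idx j) with hsvaldef
  have hsv : ∀ j, sval j = 1 ∨ sval j = -1 := hs
  -- coordinate formula
  have coordF : ∀ ε j, F ε (idx j) = F e0 (idx j) + (if ε j = 1 then sval j else 0) := by
    intro ε j
    have h := congrFun (repr' ε) (idx j)
    rw [Pi.add_apply, Finset.sum_apply] at h
    rw [h]
    congr 1
    by_cases hj : ε j = 1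
    · rw [if_pos hj]
      rw [Finset.sum_eq_single_of_mem j (by simp [hj])]
      intro b _ hb
      exact hz b (idx j) (fun hcon => hb (hidxinj hcon.symm))
    · rw [if_neg hj, Finset.sum_eq_zero]
      intro b hb
      have hbj : b ≠ j := fun h => hj (h ▸ (Finset.mem_filter.mp hb).2)
      exact hz b (idx j) (fun hcon => hbj (hidxinj hcon.symm))
  have hFlow : ∀ ε m, 0 ≤ F ε m ∧ F ε m < (n m : ℤ) := by
    intro ε m
    constructor
    · simp [hFdef]
    · simp only [hFdef]
      exact_mod_cast ((ψ ε : ∀ i, Fin (n i)) m).isLt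
  set xZ : Fin d → ℤ := fun m => if sval (σ.symm m) = 1 then F e0 m + 1 else F e0 m with hxZdef
  -- the two possible values of coordinate m
  have hvalset : ∀ ε m, F ε m = xZ m - 1 ∨ F ε m = xZ m := by
    intro ε m
    have h1 := coordF ε (σ.symm m)
    rw [hσ m] at h1
    have h4 : xZ m = if sval (σ.symm m) = 1 then F e0 m + 1 else F e0 m := rfl
    rcases hsv (σ.symm m) with hsvm | hsvm
    · rw [hsvm, if_pos rfl] at h4
      by_cases h2 : ε (σ.symm m) = 1
      · rw [if_pos h2, hsvm] at h1; omega
      · rw [if_neg h2] at h1; omega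
    · rw [hsvm, if_neg (by norm_num)] at h4
      by_cases h2 : ε (σ.symm m) = 1
      · rw [if_pos h2, hsvm] at h1; omega
      · rw [if_neg h2] at h1; omega
  have hxZbound : ∀ m, 1 ≤ xZ m ∧ xZ m ≤ (n m : ℤ) - 1 := by
    intro m
    have hb0 := hFlow e0 m
    have h1 := coordF (flip2 (σ.symm m) e0) (σ.symm m)
    rw [hσ m] at h1
    rw [flip2_self] at h1
    simp only [e0, zero_add, if_pos] at h1
    have h1' : F (flip2 (σ.symm m) e0) m = F e0 m + sval (σ.symm m) := by
      rw [h1]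
    have hb1 := hFlow (flip2 (σ.symm m) e0) m
    rw [h1'] at hb1
    simp only [hxZdef]
    rcases hsv (σ.symm m) with hsvm | hsvm
    · rw [hsvm] at hb1
      rw [hsvm, if_pos rfl]
      omega
    · rw [hsvm] at hb1
      rw [hsvm, if_neg (by norm_num)]
      omega
  set x : Fin d → ℕ := fun m => (xZ m).toNat with hxdef
  have hxcast : ∀ m, (x m : ℤ) = xZ m := by
    intro m
    have := (hxZbound m).1
    simp only [hxdef]
    omega
  have hrange : H.verts = Set.range (fun ε => ((ψ ε : ∀ i, Fin (n i)))) := by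
    ext v
    constructor
    · intro hv
      refine ⟨iso ⟨v, hv⟩, ?_⟩
      simp only [hψdef]
      rw [RelIso.symm_apply_apply]
    · rintro ⟨ε, rfl⟩
      exact (ψ ε).2
  refine ⟨x, ?_, ?_, ?_⟩
  · intro m
    have h1 := hxZbound m
    have h2 := hxcast m
    have h3 := hn m
    constructor <;> omega
  · rw [hrange]
    ext v
    simp only [Set.mem_range, Set.mem_setOf_eq]
    constructor
    · rintro ⟨ε, rfl⟩
      intro m
      have h1 := hvalset ε m
      have h2 : F ε m = (((ψ ε : ∀ i, Fin (n i)) m : ℕ) : ℤ) := rfl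
      have h3 := hxcast m
      rw [h2] at h1
      omega
    · intro hv
      refine ⟨(fun j => if ((v (idx j) : ℕ) : ℤ) = F e0 (idx j) then 0 else 1 : Fin d → Fin 2), ?_⟩
      show (ψ (fun j => if ((v (idx j) : ℕ) : ℤ) = F e0 (idx j) then 0 else 1) :
        ∀ i, Fin (n i)) = v
      funext m
      apply Fin.ext
      have goalZ : F (fun j => if ((v (idx j) : ℕ) : ℤ) = F e0 (idx j) then 0 else 1) m
          = ((v m : ℕ) : ℤ) := by
        have h1 := coordF (fun j => if ((v (idx j) : ℕ) : ℤ) = F e0 (idx j) then 0 else 1) (σ.symm m)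
        rw [hσ m] at h1
        rw [h1]
        by_cases hc : ((v m : ℕ) : ℤ) = F e0 m
        · rw [if_neg (by rw [if_pos hc]; decide), hc]
          ring
        · rw [if_pos (by rw [if_neg hc])]
          -- need: F e0 m + sval (σ.symm m) = v m
          have h2 := hv m
          have h3 := hxcast m
          have h4 : xZ m = if sval (σ.symm m) = 1 then F e0 m + 1 else F e0 m := rfl
          rcases hsv (σ.symm m) with hsvm | hsvm
          · rw [hsvm, if_pos rfl] at h4; rw [hsvm]; omega
          · rw [hsvm, if_neg (by norm_num)] at h4; rw [hsvm]; omega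
      have goalZ' : (((ψ (fun j => if ((v (idx j) : ℕ) : ℤ) = F e0 (idx j) then 0 else 1) :
          ∀ i, Fin (n i)) m : ℕ) : ℤ) = ((v m : ℕ) : ℤ) := goalZ
      exact_mod_cast goalZ'
  · -- edges
    intro u v hu hv hadj
    set εu : Fin d → Fin 2 := iso ⟨u, hu⟩ with hεu
    set εv : Fin d → Fin 2 := iso ⟨v, hv⟩ with hεv
    have hψu : (ψ εu : ∀ i, Fin (n i)) = u := by
      rw [hεu]
      exact congrArg Subtype.val (iso.toEquiv.symm_apply_apply ⟨u, hu⟩)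
    have hψv : (ψ εv : ∀ i, Fin (n i)) = v := by
      rw [hεv]
      exact congrArg Subtype.val (iso.toEquiv.symm_apply_apply ⟨v, hv⟩)
    have hFu : ∀ m, F εu m = ((u m : ℕ) : ℤ) := fun m => by
      simp only [hFdef]; rw [hψu]
    have hFv : ∀ m, F εv m = ((v m : ℕ) : ℤ) := fun m => by
      simp only [hFdef]; rw [hψv]
    obtain ⟨m, hm, hrest⟩ := hadj
    have hQ : (gridGraph (fun _ : Fin d => 2)).Adj εu εv := by
      rw [grid2_adj_iff]
      refine ⟨σ.symm m, ?_, ?_⟩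
      · intro hcon
        have h1 := coordF εu (σ.symm m)
        have h2 := coordF εv (σ.symm m)
        rw [hσ m] at h1 h2
        rw [hcon] at h1
        have h6 : ((u m : ℕ) : ℤ) = ((v m : ℕ) : ℤ) := by
          rw [← hFu m, ← hFv m, h1, h2]
        omega
      · intro j hj
        have hmj : idx j ≠ m := by
          intro hcon
          have h0 : σ j = idx j := rfl
          exact hj (by rw [← hcon, ← h0, Equiv.symm_apply_apply])
        have h1 := coordF εu j
        have h2 := coordF εv j
        have h3 : u (idx j) = v (idx j) := hrest (idx j) hmj
        have h4 : F εu (idx j) = F εv (idx j) := by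
          rw [hFu, hFv, h3]
        rw [h1, h2] at h4
        have h5 : (if εu j = 1 then sval j else 0) = (if εv j = 1 then sval j else 0) := by
          omega
        by_cases ha : εu j = 1 <;> by_cases hb : εv j = 1
        · rw [ha, hb]
        · exfalso
          rw [if_pos ha, if_neg hb] at h5
          rcases hsv j with hsj | hsj <;> omega
        · exfalso
          rw [if_neg ha, if_pos hb] at h5
          rcases hsv j with hsj | hsj <;> omega
        · have ha' : εu j = 0 := by
            rcases fin2_cases (εu j) with h | h
            · exact h
            · exact absurd h ha
          have hb' : εv j = 0 := by
            rcases fin2_cases (εv j) with h | h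
            · exact h
            · exact absurd h hb
          rw [ha', hb']
    have hcoe : H.coe.Adj (ψ εu) (ψ εv) := iso.symm.map_rel_iff.mpr hQ
    have : H.Adj ↑(ψ εu) ↑(ψ εv) := hcoe
    rwa [hψu, hψv] at this


def cubeToGrid {d : ℕ} {n : Fin d → ℕ} (x : Fin d → ℕ) (hnx : ∀ i, 1 ≤ x i ∧ x i + 1 ≤ n i)
    (ε : Fin d → Fin 2) : ∀ i, Fin (n i) :=
  fun i => ⟨x i - 1 + (ε i : ℕ), by
    have := (hnx i).1; have := (hnx i).2; have := (ε i).isLt; omega⟩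

def gridToCube {d : ℕ} (n : Fin d → ℕ) (x : Fin d → ℕ) (v : ∀ i, Fin (n i)) : Fin d → Fin 2 :=
  fun i => if (v i : ℕ) + 1 = x i then 0 else 1

lemma val_cubeToGrid {d : ℕ} {n : Fin d → ℕ} (x : Fin d → ℕ)
    (hnx : ∀ i, 1 ≤ x i ∧ x i + 1 ≤ n i) (ε : Fin d → Fin 2) (i : Fin d) :
    (cubeToGrid x hnx ε i : ℕ) = x i - 1 + (ε i : ℕ) := rfl

lemma val_gridToCube {d : ℕ} (n : Fin d → ℕ) (x : Fin d → ℕ) (v : ∀ i, Fin (n i)) (i : Fin d) :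
    ((gridToCube n x v i : Fin 2) : ℕ) = if (v i : ℕ) + 1 = x i then 0 else 1 := by
  unfold gridToCube
  split_ifs <;> rfl

lemma gridToCube_cubeToGrid {d : ℕ} {n : Fin d → ℕ} (x : Fin d → ℕ)
    (hnx : ∀ i, 1 ≤ x i ∧ x i + 1 ≤ n i) (ε : Fin d → Fin 2) :
    gridToCube n x (cubeToGrid x hnx ε) = ε := by
  funext j
  unfold gridToCube
  rw [val_cubeToGrid]
  have h1 := (hnx j).1
  have h2 := (ε j).isLt
  by_cases hc : (x j - 1 + (ε j : ℕ)) + 1 = x j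
  · rw [if_pos hc]
    apply Fin.ext
    show (0 : ℕ) = (ε j : ℕ)
    omega
  · rw [if_neg hc]
    apply Fin.ext
    show (1 : ℕ) = (ε j : ℕ)
    omega

lemma cubeToGrid_gridToCube {d : ℕ} {n : Fin d → ℕ} (x : Fin d → ℕ)
    (hnx : ∀ i, 1 ≤ x i ∧ x i + 1 ≤ n i) (v : ∀ i, Fin (n i))
    (hv : ∀ i, (v i : ℕ) + 1 = x i ∨ (v i : ℕ) + 1 = x i + 1) :
    cubeToGrid x hnx (gridToCube n x v) = v := by
  funext i
  apply Fin.ext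
  rw [val_cubeToGrid, val_gridToCube]
  have h1 := (hnx i).1
  have h2 := hv i
  by_cases hc : (v i : ℕ) + 1 = x i
  · rw [if_pos hc]
    omega
  · rw [if_neg hc]
    omega

lemma backward_dir (d : ℕ) (n : Fin d → ℕ) (hn : ∀ i, 2 ≤ n i)
    (H : (gridGraph n).Subgraph) (x : Fin d → ℕ)
    (hx : ∀ i, 1 ≤ x i ∧ x i ≤ n i - 1)
    (hverts : H.verts = {v | ∀ i, (v i : ℕ) + 1 = x i ∨ (v i : ℕ) + 1 = x i + 1})
    (hedges : ∀ u v, u ∈ H.verts → v ∈ H.verts → (gridGraph n).Adj u v → H.Adj u v) :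
    Nonempty (H.coe ≃g gridGraph (fun _ : Fin d => (2 : ℕ))) := by
  have hmem : ∀ (v : ∀ i, Fin (n i)), v ∈ H.verts ↔
      ∀ i, (v i : ℕ) + 1 = x i ∨ (v i : ℕ) + 1 = x i + 1 := by
    intro v
    rw [hverts]
    exact Iff.rfl
  have hnx : ∀ i, 1 ≤ x i ∧ x i + 1 ≤ n i := by
    intro i
    have := (hx i).1
    have := (hx i).2
    have := hn i
    omega
  have hmemc : ∀ ε : Fin d → Fin 2, cubeToGrid x hnx ε ∈ H.verts := by
    intro ε
    rw [hmem]
    intro i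
    rw [val_cubeToGrid]
    have := (hnx i).1
    have := (ε i).isLt
    omega
  constructor
  refine ⟨⟨fun v => gridToCube n x (v : ∀ i, Fin (n i)),
    fun ε => ⟨cubeToGrid x hnx ε, hmemc ε⟩, ?_, ?_⟩, ?_⟩
  · intro v
    exact Subtype.ext (cubeToGrid_gridToCube x hnx _ ((hmem _).mp v.2))
  · intro ε
    exact gridToCube_cubeToGrid x hnx ε
  · intro u v
    simp only [Equiv.coe_fn_mk]
    constructor
    · rintro ⟨i, hi, hrest⟩
      have hu := (hmem _).mp u.2
      have hv := (hmem _).mp v.2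
      have hgrid : (gridGraph n).Adj (u : ∀ i, Fin (n i)) (v : ∀ i, Fin (n i)) := by
        refine ⟨i, ?_, ?_⟩
        · have hui := hu i
          have hvi := hv i
          rw [val_gridToCube, val_gridToCube] at hi
          by_cases hcu : ((u : ∀ i, Fin (n i)) i : ℕ) + 1 = x i
          · by_cases hcv : ((v : ∀ i, Fin (n i)) i : ℕ) + 1 = x i
            · rw [if_pos hcu, if_pos hcv] at hi; omega
            · omega
          · by_cases hcv : ((v : ∀ i, Fin (n i)) i : ℕ) + 1 = x i
            · omega
            · rw [if_neg hcu, if_neg hcv] at hi; omega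
        · intro j hj
          have h3 := congrArg Fin.val (hrest j hj)
          rw [val_gridToCube, val_gridToCube] at h3
          have huj := hu j
          have hvj := hv j
          apply Fin.ext
          by_cases hcu : ((u : ∀ i, Fin (n i)) j : ℕ) + 1 = x j
          · by_cases hcv : ((v : ∀ i, Fin (n i)) j : ℕ) + 1 = x j
            · omega
            · rw [if_pos hcu, if_neg hcv] at h3; omega
          · by_cases hcv : ((v : ∀ i, Fin (n i)) j : ℕ) + 1 = x j
            · rw [if_neg hcu, if_pos hcv] at h3; omega
            · omega
      exact hedges _ _ u.2 v.2 hgrid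
    · intro hadj
      have hadj' : H.Adj ↑u ↑v := hadj
      obtain ⟨i, hi, hrest⟩ := H.adj_sub hadj'
      have hu := (hmem _).mp u.2
      have hv := (hmem _).mp v.2
      refine ⟨i, ?_, ?_⟩
      · rw [val_gridToCube, val_gridToCube]
        have hui := hu i
        have hvi := hv i
        by_cases hcu : ((u : ∀ i, Fin (n i)) i : ℕ) + 1 = x i
        · by_cases hcv : ((v : ∀ i, Fin (n i)) i : ℕ) + 1 = x i
          · omega
          · rw [if_pos hcu, if_neg hcv]; omega
        · by_cases hcv : ((v : ∀ i, Fin (n i)) i : ℕ) + 1 = x i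
          · rw [if_neg hcu, if_pos hcv]; omega
          · omega
      · intro j hj
        show gridToCube n x (u : ∀ i, Fin (n i)) j = gridToCube n x (v : ∀ i, Fin (n i)) j
        unfold gridToCube
        rw [hrest j hj]

/-- a subgraph `H` of `Grid(n 0, …, n (d-1))` is isomorphic to `Q_d` iff
there is `x ∈ [n 0 - 1] × ⋯ × [n (d-1) - 1]` such that the vertices of `H` are exactly the
`2^d` points `x + ε`, `ε ∈ {0,1}^d` (a vertex `v` having coordinates `(v i) + 1 ∈ [n i]`),
and `H` contains every edge of the grid between these vertices. -/
theorem subgraph_iso_cube_iff (d : ℕ) (hd : 2 ≤ d) (n : Fin d → ℕ) (hn : ∀ i, 2 ≤ n i)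
    (H : (gridGraph n).Subgraph) :
    Nonempty (H.coe ≃g gridGraph (fun _ : Fin d => (2 : ℕ))) ↔
    ∃ x : Fin d → ℕ, (∀ i, 1 ≤ x i ∧ x i ≤ n i - 1) ∧
      H.verts = {v | ∀ i, (v i : ℕ) + 1 = x i ∨ (v i : ℕ) + 1 = x i + 1} ∧
      (∀ u v, u ∈ H.verts → v ∈ H.verts → (gridGraph n).Adj u v → H.Adj u v) := by
  constructor
  · rintro ⟨iso⟩
    exact forward_dir d n hn H iso
  · rintro ⟨x, hx, hverts, hedges⟩
    exact backward_dir d n hn H x hx hverts hedges
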